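/- arXiv:1912.11206 — 2 statements merged into one kernel-verified Lean document; each statement's English description precedes it below -/
import Mathlib

section
/- (Theorem 1) Let S be a finite metric state space, P^π and P̂^π transition kernels, R^π a reward, V̄ a terminal value function, γ ∈ [0,1), and K = sup_h ‖V̂_{P̂,h}‖_L the maximum Lipschitz constant of the h-step model-based values under P̂. Then for any horizon H and state s, |V̂_{P̂,H}(s) − V̂_{P,H}(s)| ≤ K · Σ_{t=0}^{H−1} γ^{t+1} E_{s_t∼P_t^π(s)}[W(P^π(·|s_t), P̂^π(·|s_t))]. -/
open Finset

/-- `p` is a probability distribution on the finite set `S`. -/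
def IsDist {S : Type*} [Fintype S] (p : S → ℝ) : Prop :=
  (∀ s, 0 ≤ p s) ∧ ∑ s, p s = 1

/-- Expectation of `f` under the distribution `p`. -/
noncomputable def expect {S : Type*} [Fintype S] (p f : S → ℝ) : ℝ := ∑ s, p s * f s

/-- `iterK P t s s'` is the `t`-step transition probability of reaching `s'` from `s`
under the Markov kernel `P` (with `iterK P 0` the point mass). -/
noncomputable def iterK {S : Type*} [Fintype S] [DecidableEq S]
    (P : S → S → ℝ) : ℕ → S → S → ℝ
  | 0, s, s' => if s' = s then 1 else 0
  | (t+1), s, s' => ∑ u, P s u * iterK P t u s'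

/-- The `H`-step model-based value:
`V̂_{Q,H}(s) = Σ_{t<H} γ^t E_{s_t∼Q_t(s)}[R(s_t)] + γ^H E_{s_H∼Q_H(s)}[V̄(s_H)]`. -/
noncomputable def mbValue {S : Type*} [Fintype S] [DecidableEq S]
    (γ : ℝ) (R Vbar : S → ℝ) (Q : S → S → ℝ) (H : ℕ) (s : S) : ℝ :=
  ∑ t ∈ Finset.range H, γ ^ t * expect (iterK Q t s) R
    + γ ^ H * expect (iterK Q H s) Vbar

/-- The interpolant `U_h`: the `H`-step value expansion that rolls out the true kernel `P`
for the first `h` steps and the approximate kernel `Phat` for the remaining `H − h` steps. -/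
noncomputable def interp {S : Type*} [Fintype S] [DecidableEq S]
    (γ : ℝ) (R Vbar : S → ℝ) (P Phat : S → S → ℝ) (H h : ℕ) (s : S) : ℝ :=
  ∑ t ∈ Finset.range h, γ ^ t * expect (iterK P t s) R
    + ∑ t ∈ Finset.Ico h H, γ ^ t * ∑ s', iterK P h s s' * expect (iterK Phat (t - h) s') R
    + γ ^ H * ∑ s', iterK P h s s' * expect (iterK Phat (H - h) s') Vbar

/-- Wasserstein-1 distance in Kantorovich–Rubinstein dual form. -/
noncomputable def wass {S : Type*} [Fintype S] [MetricSpace S] (p q : S → ℝ) : ℝ :=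
  ⨆ f : {f : S → ℝ // LipschitzWith 1 f}, (expect p f.1 - expect q f.1)


set_option linter.unusedSectionVars false
section Aux
variable {S : Type*} [Fintype S] [DecidableEq S]
lemma my_expect_add (p f g : S → ℝ) :
    expect p (fun x => f x + g x) = expect p f + expect p g := by
  simp [_root_.expect, mul_add, Finset.sum_add_distrib]

lemma my_expect_sub (p f g : S → ℝ) :
    expect p (fun x => f x - g x) = expect p f - expect p g := by
  simp [_root_.expect, mul_sub, Finset.sum_sub_distrib]

lemma my_expect_const_mul (p f : S → ℝ) (c : ℝ) :
    expect p (fun x => c * f x) = c * expect p f := by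
  simp [_root_.expect, Finset.mul_sum, mul_left_comm]

lemma my_expect_sum (p : S → ℝ) {ι : Type*} (T : Finset ι) (f : ι → S → ℝ) :
    expect p (fun x => ∑ t ∈ T, f t x) = ∑ t ∈ T, expect p (f t) := by
  simp only [_root_.expect, Finset.mul_sum]
  exact Finset.sum_comm

lemma my_expect_point (P : S → S → ℝ) (s : S) (f : S → ℝ) :
    expect (iterK P 0 s) f = f s := by
  simp [_root_.expect, iterK, ite_mul]

lemma my_expect_front (P : S → S → ℝ) (t : ℕ) (u : S) (f : S → ℝ) :
    expect (iterK P (t+1) u) f = expect (P u) (fun s' => expect (iterK P t s') f) := by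
  simp only [_root_.expect, iterK, Finset.sum_mul, Finset.mul_sum]
  rw [Finset.sum_comm]
  exact Finset.sum_congr rfl fun s' _ => Finset.sum_congr rfl fun s'' _ => by ring

lemma my_iterK_succ' (P : S → S → ℝ) (t : ℕ) (s s' : S) :
    iterK P (t+1) s s' = ∑ u, iterK P t s u * P u s' := by
  induction t generalizing s with
  | zero => simp [iterK, ite_mul]
  | succ t ih =>
    calc iterK P (t+1+1) s s' = ∑ u, P s u * ∑ v, iterK P t u v * P v s' := by
          show (∑ u, P s u * iterK P (t+1) u s') = _
          exact Finset.sum_congr rfl fun u _ => by rw [ih]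
      _ = ∑ v, (∑ u, P s u * iterK P t u v) * P v s' := by
          simp_rw [Finset.mul_sum, Finset.sum_mul]
          rw [Finset.sum_comm]
          exact Finset.sum_congr rfl fun _ _ => Finset.sum_congr rfl fun _ _ => by ring
      _ = ∑ u, iterK P (t+1) s u * P u s' := by simp only [iterK]

lemma my_expect_back (P : S → S → ℝ) (h : ℕ) (s : S) (f : S → ℝ) :
    expect (iterK P (h+1) s) f = expect (iterK P h s) (fun u => expect (P u) f) := by
  simp only [_root_.expect]
  simp_rw [my_iterK_succ', Finset.sum_mul, Finset.mul_sum]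
  rw [Finset.sum_comm]
  exact Finset.sum_congr rfl fun _ _ => Finset.sum_congr rfl fun _ _ => by ring

lemma my_iterK_nonneg (P : S → S → ℝ) (hP : ∀ s s', 0 ≤ P s s') (t : ℕ) (s s' : S) :
    0 ≤ iterK P t s s' := by
  induction t generalizing s with
  | zero => simp only [iterK]; split_ifs <;> norm_num
  | succ t ih =>
    show 0 ≤ ∑ u, P s u * iterK P t u s'
    exact Finset.sum_nonneg fun u _ => mul_nonneg (hP s u) (ih u)

lemma my_mbValue_succ (γ : ℝ) (R Vbar : S → ℝ) (Q : S → S → ℝ) (m : ℕ) (u : S) :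
    mbValue γ R Vbar Q (m+1) u
      = R u + γ * expect (Q u) (fun s' => mbValue γ R Vbar Q m s') := by
  simp only [mbValue]
  rw [Finset.sum_range_succ', my_expect_point, pow_zero, one_mul]
  have hrhs : expect (Q u) (fun s' => (∑ t ∈ Finset.range m, γ ^ t * expect (iterK Q t s') R)
        + γ ^ m * expect (iterK Q m s') Vbar)
      = (∑ t ∈ Finset.range m, γ ^ t * expect (Q u) (fun s' => expect (iterK Q t s') R))
        + γ ^ m * expect (Q u) (fun s' => expect (iterK Q m s') Vbar) := by
    rw [my_expect_add, my_expect_sum, my_expect_const_mul]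
    exact congrArg₂ _ (Finset.sum_congr rfl fun t _ => my_expect_const_mul _ _ _) rfl
  rw [hrhs, mul_add, Finset.mul_sum]
  simp_rw [my_expect_front, ← mul_assoc, ← pow_succ']
  ring

end Aux
lemma my_abs_expect_sub_le_mul_wass {S : Type*} [Fintype S] [MetricSpace S]
    (s0 : S) (p q : S → ℝ) (hp : IsDist p) (hq : IsDist q)
    (K : ℝ) (hK : 0 ≤ K) (f : S → ℝ) (hf : ∀ x y, |f x - f y| ≤ K * dist x y) :
    |expect p f - expect q f| ≤ K * wass p q := by
  have key : ∀ g : S → ℝ, (∀ x, |g x - g s0| ≤ dist x s0) →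
      expect p g - expect q g ≤ ∑ x, |p x - q x| * dist x s0 := by
    intro g hg
    have h1 : expect p g - expect q g = ∑ x, (p x - q x) * (g x - g s0) := by
      simp only [_root_.expect]
      rw [← Finset.sum_sub_distrib]
      have h2 : (∑ x, (p x - q x)) * g s0 = 0 := by
        rw [Finset.sum_sub_distrib, hp.2, hq.2]; ring
      calc ∑ x, (p x * g x - q x * g x)
          = (∑ x, (p x - q x) * (g x - g s0)) + (∑ x, (p x - q x)) * g s0 := by
            rw [Finset.sum_mul, ← Finset.sum_add_distrib]
            exact Finset.sum_congr rfl fun x _ => by ring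
        _ = _ := by rw [h2, add_zero]
    rw [h1]
    refine Finset.sum_le_sum fun x _ => ?_
    calc (p x - q x) * (g x - g s0) ≤ |(p x - q x) * (g x - g s0)| := le_abs_self _
      _ = |p x - q x| * |g x - g s0| := abs_mul _ _
      _ ≤ |p x - q x| * dist x s0 :=
          mul_le_mul_of_nonneg_left (hg x) (abs_nonneg _)
  have bdd : BddAbove (Set.range fun g : {f : S → ℝ // LipschitzWith 1 f} =>
      expect p g.1 - expect q g.1) := by
    refine ⟨∑ x, |p x - q x| * dist x s0, ?_⟩
    rintro _ ⟨g, rfl⟩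
    refine key g.1 fun x => ?_
    have := g.2.dist_le_mul x s0
    rwa [NNReal.coe_one, one_mul, Real.dist_eq] at this
  rcases eq_or_lt_of_le hK with hK0 | hK0
  · -- K = 0 : f is constant
    have hconst : ∀ x, f x = f s0 := by
      intro x
      have h := hf x s0
      rw [← hK0, zero_mul] at h
      have := abs_nonneg (f x - f s0)
      have : |f x - f s0| = 0 := le_antisymm h this
      have := abs_eq_zero.1 this
      linarith [sub_eq_zero.1 this, (rfl : f x = f x)]
    have hep : ∀ r : S → ℝ, IsDist r → expect r f = f s0 := by
      intro r hr
      simp only [_root_.expect]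
      calc ∑ x, r x * f x = ∑ x, r x * f s0 :=
            Finset.sum_congr rfl fun x _ => by rw [hconst x]
        _ = (∑ x, r x) * f s0 := by rw [Finset.sum_mul]
        _ = f s0 := by rw [hr.2, one_mul]
    rw [hep p hp, hep q hq, sub_self, abs_zero, ← hK0, zero_mul]
  · -- K > 0
    have hKne : K ≠ 0 := ne_of_gt hK0
    set g : S → ℝ := fun x => f x / K with hg
    have hgl : LipschitzWith 1 g := by
      refine LipschitzWith.of_dist_le_mul fun x y => ?_
      rw [NNReal.coe_one, one_mul, Real.dist_eq, hg]
      simp only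
      rw [div_sub_div_same, abs_div, abs_of_pos hK0, div_le_iff₀ hK0]
      calc |f x - f y| ≤ K * dist x y := hf x y
        _ = dist x y * K := mul_comm _ _
    have hfg : ∀ r : S → ℝ, expect r f = K * expect r g := by
      intro r
      simp only [_root_.expect, hg, Finset.mul_sum]
      exact Finset.sum_congr rfl fun x _ => by field_simp
    have hgl' : LipschitzWith 1 (fun x => -g x) := hgl.neg
    have hle1 : expect p g - expect q g ≤ wass p q := le_ciSup bdd ⟨g, hgl⟩
    have hle2 : expect p (fun x => -g x) - expect q (fun x => -g x) ≤ wass p q :=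
      le_ciSup bdd ⟨_, hgl'⟩
    have hneg : ∀ r : S → ℝ, expect r (fun x => -g x) = - expect r g := by
      intro r; simp [_root_.expect]
    rw [hneg, hneg] at hle2
    rw [hfg p, hfg q, ← mul_sub, abs_mul, abs_of_pos hK0]
    refine mul_le_mul_of_nonneg_left ?_ hK0.le
    rw [abs_le]
    constructor
    · linarith
    · exact hle1

lemma my_U_step {S : Type*} [Fintype S] [DecidableEq S]
    (γ : ℝ) (R Vbar : S → ℝ) (P Phat : S → S → ℝ) (H h : ℕ) (hh : h < H) (s : S) :
    ((∑ t ∈ Finset.range (h+1), γ ^ t * expect (iterK P t s) R)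
        + γ ^ (h+1) * expect (iterK P (h+1) s) (fun u => mbValue γ R Vbar Phat (H-(h+1)) u))
      - ((∑ t ∈ Finset.range h, γ ^ t * expect (iterK P t s) R)
        + γ ^ h * expect (iterK P h s) (fun u => mbValue γ R Vbar Phat (H-h) u))
    = γ ^ (h+1) * expect (iterK P h s) (fun u =>
        expect (P u) (fun v => mbValue γ R Vbar Phat (H-(h+1)) v)
        - expect (Phat u) (fun v => mbValue γ R Vbar Phat (H-(h+1)) v)) := by
  have hm : H - h = (H - (h+1)) + 1 := by omega
  rw [hm, Finset.sum_range_succ, my_expect_back, my_expect_sub]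
  simp_rw [my_mbValue_succ]
  rw [my_expect_add, my_expect_const_mul]
  ring

/-- Theorem 1: If `K` bounds the Lipschitz constants of all `h`-step
model-based values under the approximate kernel `P̂`, then for any horizon `H` and state `s`,
`|V̂_{P̂,H}(s) − V̂_{P,H}(s)| ≤ K Σ_{t<H} γ^{t+1} E_{s_t∼P_t(s)}[W(P(·|s_t), P̂(·|s_t))]`. -/
theorem mbValue_error_le_cumulative_model_error
    {S : Type*} [Fintype S] [DecidableEq S] [MetricSpace S]
    (γ : ℝ) (hγ : 0 ≤ γ ∧ γ < 1) (R Vbar : S → ℝ) (P Phat : S → S → ℝ)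
    (hP : ∀ s, IsDist (P s)) (hPhat : ∀ s, IsDist (Phat s))
    (K : ℝ)
    (hLip : ∀ h s s', |mbValue γ R Vbar Phat h s - mbValue γ R Vbar Phat h s'| ≤ K * dist s s')
    (H : ℕ) (s : S) :
    |mbValue γ R Vbar Phat H s - mbValue γ R Vbar P H s| ≤
      K * ∑ t ∈ Finset.range H,
        γ ^ (t+1) * expect (iterK P t s) (fun u => wass (P u) (Phat u)) := by
  by_cases hK : 0 ≤ K
  · -- main case
    set U : ℕ → ℝ := fun h =>
      (∑ t ∈ Finset.range h, γ ^ t * expect (iterK P t s) R)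
        + γ ^ h * expect (iterK P h s) (fun u => mbValue γ R Vbar Phat (H-h) u) with hU
    have hU0 : U 0 = mbValue γ R Vbar Phat H s := by
      simp [hU, my_expect_point]
    have hUH : U H = mbValue γ R Vbar P H s := by
      have h0 : ∀ u : S, mbValue γ R Vbar Phat 0 u = Vbar u := by
        intro u; simp [mbValue, my_expect_point]
      simp only [hU, Nat.sub_self, h0]
      rfl
    have tele : mbValue γ R Vbar Phat H s - mbValue γ R Vbar P H s
        = ∑ h ∈ Finset.range H, (U h - U (h+1)) := by
      rw [Finset.sum_range_sub' U H, hU0, hUH]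
    rw [tele]
    calc |∑ h ∈ Finset.range H, (U h - U (h+1))|
        ≤ ∑ h ∈ Finset.range H, |U h - U (h+1)| := Finset.abs_sum_le_sum_abs _ _
      _ ≤ ∑ h ∈ Finset.range H,
            γ ^ (h+1) * (K * expect (iterK P h s) (fun u => wass (P u) (Phat u))) := by
          refine Finset.sum_le_sum fun h hh => ?_
          rw [abs_sub_comm, hU, my_U_step γ R Vbar P Phat H h (Finset.mem_range.1 hh) s]
          rw [abs_mul, abs_of_nonneg (pow_nonneg hγ.1 _)]
          refine mul_le_mul_of_nonneg_left ?_ (pow_nonneg hγ.1 _)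
          simp only [_root_.expect]
          calc |∑ u, iterK P h s u * (expect (P u) (fun v => mbValue γ R Vbar Phat (H-(h+1)) v)
                  - expect (Phat u) (fun v => mbValue γ R Vbar Phat (H-(h+1)) v))|
              ≤ ∑ u, |iterK P h s u * (expect (P u) (fun v => mbValue γ R Vbar Phat (H-(h+1)) v)
                  - expect (Phat u) (fun v => mbValue γ R Vbar Phat (H-(h+1)) v))| :=
                Finset.abs_sum_le_sum_abs _ _
            _ ≤ ∑ u, iterK P h s u * (K * wass (P u) (Phat u)) := by
                refine Finset.sum_le_sum fun u _ => ?_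
                rw [abs_mul, abs_of_nonneg (my_iterK_nonneg P (fun a b => (hP a).1 b) h s u)]
                refine mul_le_mul_of_nonneg_left ?_
                  (my_iterK_nonneg P (fun a b => (hP a).1 b) h s u)
                exact my_abs_expect_sub_le_mul_wass s (P u) (Phat u) (hP u) (hPhat u)
                  K hK (fun v => mbValue γ R Vbar Phat (H-(h+1)) v)
                  (fun x y => hLip (H-(h+1)) x y)
            _ = K * ∑ u, iterK P h s u * wass (P u) (Phat u) := by
                rw [Finset.mul_sum]
                exact Finset.sum_congr rfl fun u _ => by ring
      _ = K * ∑ t ∈ Finset.range H,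
            γ ^ (t+1) * expect (iterK P t s) (fun u => wass (P u) (Phat u)) := by
          rw [Finset.mul_sum]
          exact Finset.sum_congr rfl fun t _ => by ring
  · -- degenerate case: K < 0 forces S to be a subsingleton
    push_neg at hK
    have hsub : ∀ a b : S, a = b := by
      intro a b
      by_contra hne
      have h := hLip 0 a b
      have hd : 0 < dist a b := dist_pos.2 hne
      nlinarith [abs_nonneg (mbValue γ R Vbar Phat 0 a - mbValue γ R Vbar Phat 0 b)]
    have hPP : P = Phat := by
      funext u v
      have h1 := (hP u).2
      have h2 := (hPhat u).2
      have huniv : (Finset.univ : Finset S) = {v} := by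
        apply Finset.eq_singleton_iff_unique_mem.2
        exact ⟨Finset.mem_univ v, fun x _ => hsub x v⟩
      rw [huniv, Finset.sum_singleton] at h1 h2
      rw [h1, h2]
    rw [hPP, sub_self, abs_zero]
    have hw : ∀ u : S, wass (Phat u) (Phat u) = 0 := by
      intro u
      have : Nonempty {f : S → ℝ // LipschitzWith 1 f} :=
        ⟨⟨fun _ => 0, (LipschitzWith.const 0).weaken (by norm_num)⟩⟩
      simp only [wass, sub_self]
      exact ciSup_const
    have : ∀ t ∈ Finset.range H,
        γ ^ (t+1) * expect (iterK Phat t s) (fun u => wass (Phat u) (Phat u)) = 0 := by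
      intro t _
      simp [hw, _root_.expect]
    rw [Finset.sum_congr rfl this, Finset.sum_const, smul_zero, mul_zero]
end

section
/- If the model error is uniformly bounded, W(P^π(·|s), P̂^π(·|s)) ≤ ε for all s, then the H-step model-based value error satisfies |V̂_{P̂,H}(s) − V̂_{P,H}(s)| ≤ K·ε·γ·(1 − γ^H)/(1 − γ) for all states s. -/
open Finset

section MyAux
variable {S : Type*} [Fintype S] [DecidableEq S]

lemma expect_iterK_zero (Q : S → S → ℝ) (f : S → ℝ) (s : S) :
    _root_.expect (iterK Q 0 s) f = f s := by
  simp [_root_.expect, iterK, ite_mul]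

lemma expect_iterK_succ (Q : S → S → ℝ) (f : S → ℝ) (t : ℕ) (s : S) :
    _root_.expect (iterK Q (t+1) s) f = ∑ u, Q s u * _root_.expect (iterK Q t u) f := by
  simp only [_root_.expect, iterK, Finset.sum_mul, Finset.mul_sum]
  rw [Finset.sum_comm]
  exact Finset.sum_congr rfl fun u _ => Finset.sum_congr rfl fun s' _ => by ring

lemma mbValue_succ (γ : ℝ) (R Vbar : S → ℝ) (Q : S → S → ℝ) (H : ℕ) (s : S) :
    mbValue γ R Vbar Q (H+1) s = R s + γ * ∑ u, Q s u * mbValue γ R Vbar Q H u := by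
  unfold mbValue
  rw [Finset.sum_range_succ']
  simp only [expect_iterK_succ, expect_iterK_zero, pow_zero, one_mul, pow_succ,
    mul_add, Finset.mul_sum, Finset.sum_add_distrib]
  rw [Finset.sum_comm]
  have h1 : ∑ y : S, ∑ x ∈ Finset.range H, γ ^ x * γ * (Q s y * _root_.expect (iterK Q x y) R)
      = ∑ y : S, ∑ x ∈ Finset.range H, γ * (Q s y * (γ ^ x * _root_.expect (iterK Q x y) R)) :=
    Finset.sum_congr rfl fun _ _ => Finset.sum_congr rfl fun _ _ => by ring
  have h2 : ∑ i : S, γ ^ H * γ * (Q s i * _root_.expect (iterK Q H i) Vbar)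
      = ∑ i : S, γ * (Q s i * (γ ^ H * _root_.expect (iterK Q H i) Vbar)) :=
    Finset.sum_congr rfl fun _ _ => by ring
  rw [h1, h2]; ring

end MyAux

section MyW
variable {S : Type*} [Fintype S] [MetricSpace S]

lemma expect_sub_le_wass (p q : S → ℝ) (hp : IsDist p) (hq : IsDist q)
    (f : S → ℝ) (hf : LipschitzWith 1 f) :
    _root_.expect p f - _root_.expect q f ≤ wass p q := by
  have hbdd : BddAbove (Set.range fun g : {f : S → ℝ // LipschitzWith 1 f} =>
      _root_.expect p g.1 - _root_.expect q g.1) := by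
    cases isEmpty_or_nonempty S with
    | inl h =>
      refine ⟨0, ?_⟩
      rintro x ⟨g, rfl⟩
      simp [_root_.expect]
    | inr h =>
      set s0 := Classical.arbitrary S with hs0
      refine ⟨(∑ s : S, dist s s0) + ∑ s : S, dist s s0, ?_⟩
      rintro x ⟨⟨g, hg⟩, rfl⟩
      have key : ∀ r : S → ℝ, IsDist r →
          ∑ s, r s * g s = (∑ s, r s * (g s - g s0)) + g s0 := by
        intro r hr
        have h1 : ∑ s, r s * g s = ∑ s, (r s * (g s - g s0) + r s * g s0) :=
          Finset.sum_congr rfl fun s _ => by ring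
        rw [h1, Finset.sum_add_distrib, ← Finset.sum_mul, hr.2, one_mul]
      have hb : ∀ r : S → ℝ, IsDist r →
          |∑ s, r s * (g s - g s0)| ≤ ∑ s : S, dist s s0 := by
        intro r hr
        calc |∑ s, r s * (g s - g s0)| ≤ ∑ s, |r s * (g s - g s0)| :=
              Finset.abs_sum_le_sum_abs _ _
          _ ≤ ∑ s : S, dist s s0 := by
            refine Finset.sum_le_sum fun s _ => ?_
            rw [abs_mul, abs_of_nonneg (hr.1 s)]
            have h1 : r s ≤ 1 := by
              have h := Finset.single_le_sum (f := r) (fun i _ => hr.1 i) (Finset.mem_univ s)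
              rwa [hr.2] at h
            have h2 : |g s - g s0| ≤ dist s s0 := by
              have := hg.dist_le_mul s s0
              rw [Real.dist_eq, NNReal.coe_one, one_mul] at this
              exact this
            calc r s * |g s - g s0| ≤ 1 * dist s s0 :=
                  mul_le_mul h1 h2 (abs_nonneg _) zero_le_one
              _ = dist s s0 := one_mul _
      simp only [_root_.expect, Set.mem_setOf_eq]
      rw [key p hp, key q hq]
      have hhp := abs_le.mp (hb p hp)
      have hhq := abs_le.mp (hb q hq)
      linarith [hhp.2, hhq.1]
  exact le_ciSup hbdd ⟨f, hf⟩

lemma abs_expect_sub_le_wass (p q : S → ℝ) (hp : IsDist p) (hq : IsDist q)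
    (f : S → ℝ) (hf : LipschitzWith 1 f) :
    |_root_.expect p f - _root_.expect q f| ≤ wass p q := by
  rw [abs_le]
  constructor
  · have hneg : LipschitzWith 1 (fun x => -f x) := hf.neg
    have := expect_sub_le_wass p q hp hq _ hneg
    have e1 : _root_.expect p (fun x => -f x) = -_root_.expect p f := by
      simp [_root_.expect, mul_neg]
    have e2 : _root_.expect q (fun x => -f x) = -_root_.expect q f := by
      simp [_root_.expect, mul_neg]
    rw [e1, e2] at this
    linarith
  · exact expect_sub_le_wass p q hp hq f hf

lemma abs_expect_sub_le_K (p q : S → ℝ) (hp : IsDist p) (hq : IsDist q)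
    (V : S → ℝ) (K ε : ℝ) (hK : 0 ≤ K)
    (hV : ∀ u u', |V u - V u'| ≤ K * dist u u') (hw : wass p q ≤ ε) :
    |_root_.expect p V - _root_.expect q V| ≤ K * ε := by
  rcases eq_or_lt_of_le hK with hK0 | hK0
  · have hconst : ∀ u u', V u = V u' := by
      intro u u'
      have h := hV u u'
      rw [← hK0, zero_mul] at h
      have := abs_nonneg (V u - V u')
      have : |V u - V u'| = 0 := le_antisymm h this
      have := abs_eq_zero.mp this
      linarith
    cases isEmpty_or_nonempty S with
    | inl h => simp [_root_.expect, ← hK0]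
    | inr h =>
      have s0 : S := Classical.arbitrary S
      have e : ∀ r : S → ℝ, IsDist r → _root_.expect r V = V s0 := by
        intro r hr
        have : ∀ s, r s * V s = r s * V s0 := fun s => by rw [hconst s s0]
        rw [_root_.expect, Finset.sum_congr rfl fun s _ => this s, ← Finset.sum_mul, hr.2, one_mul]
      rw [e p hp, e q hq, sub_self, abs_zero, ← hK0, zero_mul]
  · set f := fun x => V x / K with hf_def
    have hf : LipschitzWith 1 f := by
      apply LipschitzWith.of_dist_le_mul
      intro x y
      rw [Real.dist_eq, NNReal.coe_one, one_mul]
      have : f x - f y = (V x - V y) / K := by rw [hf_def]; ring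
      rw [this, abs_div, abs_of_pos hK0, div_le_iff₀ hK0]
      calc |V x - V y| ≤ K * dist x y := hV x y
        _ = dist x y * K := mul_comm _ _
    have h1 := abs_expect_sub_le_wass p q hp hq f hf
    have e : ∀ r : S → ℝ, _root_.expect r f = _root_.expect r V / K := by
      intro r
      simp only [_root_.expect, hf_def, Finset.sum_div]
      exact Finset.sum_congr rfl fun s _ => by ring
    rw [e p, e q, div_sub_div_same, abs_div, abs_of_pos hK0, div_le_iff₀ hK0] at h1
    calc |_root_.expect p V - _root_.expect q V| ≤ wass p q * K := h1
      _ ≤ ε * K := mul_le_mul_of_nonneg_right hw hK0.le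
      _ = K * ε := mul_comm _ _

end MyW

/-- Under a uniform model-error bound `W(P(·|s), P̂(·|s)) ≤ ε` for all `s`,
the `H`-step model-based value error satisfies
`|V̂_{P̂,H}(s) − V̂_{P,H}(s)| ≤ K ε γ (1 − γ^H)/(1 − γ)` for all states `s`. -/
theorem mbValue_error_le_of_uniform_model_error
    {S : Type*} [Fintype S] [DecidableEq S] [MetricSpace S]
    (γ : ℝ) (hγ : 0 ≤ γ ∧ γ < 1) (R Vbar : S → ℝ) (P Phat : S → S → ℝ)
    (hP : ∀ s, IsDist (P s)) (hPhat : ∀ s, IsDist (Phat s))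
    (K : ℝ) (hK : 0 ≤ K)
    (hLip : ∀ h s s', |mbValue γ R Vbar Phat h s - mbValue γ R Vbar Phat h s'| ≤ K * dist s s')
    (ε : ℝ) (hε : 0 ≤ ε) (hW : ∀ s, wass (P s) (Phat s) ≤ ε) (H : ℕ) (s : S) :
    |mbValue γ R Vbar Phat H s - mbValue γ R Vbar P H s| ≤
      K * ε * γ * (1 - γ ^ H) / (1 - γ) := by
  obtain ⟨hγ0, hγ1⟩ := hγ
  have h1γ : (0:ℝ) < 1 - γ := by linarith
  induction H generalizing s with
  | zero =>
    simp [mbValue, expect_iterK_zero]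
  | succ H ih =>
    rw [mbValue_succ, mbValue_succ]
    set Vh := mbValue γ R Vbar Phat H with hVhat
    set V := mbValue γ R Vbar P H with hV
    have term1 : |_root_.expect (P s) Vh - _root_.expect (Phat s) Vh| ≤ K * ε :=
      abs_expect_sub_le_K (P s) (Phat s) (hP s) (hPhat s) Vh K ε hK
        (fun u u' => hLip H u u') (hW s)
    have term2 : |_root_.expect (P s) Vh - _root_.expect (P s) V| ≤ K * ε * γ * (1 - γ ^ H) / (1 - γ) := by
      have e : _root_.expect (P s) Vh - _root_.expect (P s) V = ∑ u, P s u * (Vh u - V u) := by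
        simp only [_root_.expect, ← Finset.sum_sub_distrib]
        exact Finset.sum_congr rfl fun u _ => by ring
      rw [e]
      calc |∑ u, P s u * (Vh u - V u)| ≤ ∑ u, |P s u * (Vh u - V u)| :=
            Finset.abs_sum_le_sum_abs _ _
        _ ≤ ∑ u : S, P s u * (K * ε * γ * (1 - γ ^ H) / (1 - γ)) := by
            refine Finset.sum_le_sum fun u _ => ?_
            rw [abs_mul, abs_of_nonneg ((hP s).1 u)]
            exact mul_le_mul_of_nonneg_left (ih u) ((hP s).1 u)
        _ = K * ε * γ * (1 - γ ^ H) / (1 - γ) := by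
            rw [← Finset.sum_mul, (hP s).2, one_mul]
    have key : R s + γ * ∑ u, Phat s u * Vh u - (R s + γ * ∑ u, P s u * V u)
        = γ * ((_root_.expect (Phat s) Vh - _root_.expect (P s) Vh) + (_root_.expect (P s) Vh - _root_.expect (P s) V)) := by
      simp only [_root_.expect]; ring
    rw [key, abs_mul, abs_of_nonneg hγ0]
    have habs : |_root_.expect (Phat s) Vh - _root_.expect (P s) Vh| ≤ K * ε := by
      rw [abs_sub_comm]; exact term1
    have hb : |(_root_.expect (Phat s) Vh - _root_.expect (P s) Vh) + (_root_.expect (P s) Vh - _root_.expect (P s) V)|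
        ≤ K * ε + K * ε * γ * (1 - γ ^ H) / (1 - γ) :=
      le_trans (abs_add_le _ _) (add_le_add habs term2)
    calc γ * |(_root_.expect (Phat s) Vh - _root_.expect (P s) Vh) + (_root_.expect (P s) Vh - _root_.expect (P s) V)|
        ≤ γ * (K * ε + K * ε * γ * (1 - γ ^ H) / (1 - γ)) :=
          mul_le_mul_of_nonneg_left hb hγ0
      _ = K * ε * γ * (1 - γ ^ (H + 1)) / (1 - γ) := by
          field_simp
          ring
end
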